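/- Every weight measure with stepped base weights is gapfree: if μ is a weight measure over a finite alphabet Σ with values in a linearly ordered cancellative commutative monoid A, and there exists s ∈ A such that μ(Σ) = { m · s^i : 0 ≤ i ≤ |μ(Σ)| − 1 } where m = min(μ(Σ)), then μ is gapfree. -/

import Mathlib

/-- The weight of a word: the product of the weights of its letters. -/
def weight {α A : Type*} [CommMonoid A] [LinearOrder A] [IsOrderedCancelMonoid A] (μ : α → A) (w : List α) : A :=
  (w.map μ).prod

/-- The factor-weight function: `factorWeight μ w i` is the maximum weight of a
length-`i` factor (contiguous subword) of `w`. -/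
def factorWeight {α A : Type*} [CommMonoid A] [LinearOrder A] [IsOrderedCancelMonoid A] (μ : α → A)
    (w : List α) (i : ℕ) : A :=
  ((List.range (w.length + 1 - i)).map fun j => weight μ ((w.drop j).take i)).foldr max 1

/-- A word is `μ`-prefix normal if its factor-weight function agrees with its
prefix-weight function. -/
def PrefixNormal {α A : Type*} [CommMonoid A] [LinearOrder A] [IsOrderedCancelMonoid A] (μ : α → A)
    (w : List α) : Prop :=
  ∀ i ≤ w.length, factorWeight μ w i = weight μ (w.take i)

/-- A weight measure is gapfree if for every word `w` and every `1 ≤ i ≤ |w|` there is a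
letter `a` with `f_{w,μ}(i) = f_{w,μ}(i-1) * μ a`. -/
def Gapfree {α A : Type*} [CommMonoid A] [LinearOrder A] [IsOrderedCancelMonoid A] (μ : α → A) : Prop :=
  ∀ w : List α, ∀ i, 1 ≤ i → i ≤ w.length →
    ∃ a : α, factorWeight μ w i = factorWeight μ w (i - 1) * μ a

/-- `pnClass μ w` is the set `P_μ(w)` of words that are factor-weight equivalent to `w`
and `μ`-prefix normal. -/
def pnClass {α A : Type*} [CommMonoid A] [LinearOrder A] [IsOrderedCancelMonoid A] (μ : α → A)
    (w : List α) : Set (List α) :=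
  {v | (∀ i, factorWeight μ v i = factorWeight μ w i) ∧ PrefixNormal μ v}

section helpers
variable {α A : Type*} [CommMonoid A] [LinearOrder A] [IsOrderedCancelMonoid A]

lemma le_foldr_max' {l : List A} {x : A} (hx : x ∈ l) : x ≤ l.foldr max 1 := by
  induction l with
  | nil => simp at hx
  | cons a t ih =>
    rcases List.mem_cons.mp hx with h | h
    · simp [h]
    · exact le_max_of_le_right (ih h)

lemma foldr_max_mem' {l : List A} (hl : l ≠ []) (h1 : ∀ x ∈ l, 1 ≤ x) :
    l.foldr max 1 ∈ l := by
  induction l with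
  | nil => simp at hl
  | cons a t ih =>
    cases t with
    | nil => simp [max_eq_left (h1 a (by simp))]
    | cons b t' =>
      have ht : (b :: t').foldr max 1 ∈ b :: t' :=
        ih (by simp) (fun x hx => h1 x (List.mem_cons_of_mem _ hx))
      rcases le_total ((b :: t').foldr max 1) a with h | h
      · simp only [List.foldr_cons] at *
        rw [max_eq_left h]
        exact List.mem_cons_self
      · simp only [List.foldr_cons] at *
        rw [max_eq_right h]
        exact List.mem_cons_of_mem _ ht

lemma one_le_weight {μ : α → A} (hμ : ∀ a, 1 < μ a) (u : List α) : 1 ≤ weight μ u := by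
  induction u with
  | nil => simp [weight]
  | cons a t ih =>
    have : weight μ (a :: t) = μ a * weight μ t := by simp [weight]
    rw [this]
    exact one_le_mul (hμ a).le ih

lemma weight_take_succ (μ : α → A) (l : List α) (n : ℕ) (h : n < l.length) :
    weight μ (l.take (n + 1)) = weight μ (l.take n) * μ (l.get ⟨n, h⟩) := by
  unfold weight
  rw [List.map_take, List.map_take, List.prod_take_succ _ n (by simpa using h)]
  simp

lemma weight_decomp {μ : α → A} {m s : A} {N : ℕ}
    (hμs : ∀ a, ∃ k, k < N ∧ μ a = m * s ^ k) (u : List α) :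
    ∃ K, weight μ u = m ^ u.length * s ^ K ∧ K ≤ (N - 1) * u.length := by
  induction u with
  | nil => exact ⟨0, by simp [weight], by simp⟩
  | cons a t ih =>
    obtain ⟨K, hK, hKb⟩ := ih
    obtain ⟨k, hk, hak⟩ := hμs a
    refine ⟨k + K, ?_, ?_⟩
    · have : weight μ (a :: t) = μ a * weight μ t := by simp [weight]
      rw [this, hak, hK, mul_mul_mul_comm, ← pow_succ', ← pow_add]
      simp
    · have h1 : k ≤ N - 1 := Nat.le_sub_one_of_lt hk
      calc k + K ≤ (N - 1) + (N - 1) * t.length := Nat.add_le_add h1 hKb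
        _ = (N - 1) * (a :: t).length := by simp [Nat.mul_succ, Nat.mul_add]; ring

end helpers

/-- Every weight measure with stepped base weights is gapfree: if
`μ(Σ) = { m * s^i : 0 ≤ i ≤ |μ(Σ)| - 1 }` where `m = min μ(Σ)`, then `μ` is gapfree. -/
theorem stepped_baseWeights_gapfree {α A : Type*} [Fintype α] [Nonempty α] [DecidableEq A]
    [CommMonoid A] [LinearOrder A] [IsOrderedCancelMonoid A] (μ : α → A) (hμ : ∀ a : α, 1 < μ a)
    (hstep : ∃ s : A, Finset.univ.image μ =
      (Finset.range (Finset.univ.image μ).card).image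
        (fun i => (Finset.univ.image μ).min'
          (Finset.image_nonempty.mpr Finset.univ_nonempty) * s ^ i)) :
    Gapfree μ := by
  classical
  obtain ⟨s, hst⟩ := hstep
  have hS : (Finset.univ.image μ).Nonempty := Finset.image_nonempty.mpr Finset.univ_nonempty
  set m : A := (Finset.univ.image μ).min' (Finset.image_nonempty.mpr Finset.univ_nonempty)
    with hmdef
  set N : ℕ := (Finset.univ.image μ).card with hNdef
  have hN1 : 1 ≤ N := Finset.card_pos.mpr hS
  have hμs : ∀ a : α, ∃ k, k < N ∧ μ a = m * s ^ k := by
    intro a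
    have h1 : μ a ∈ Finset.univ.image μ := Finset.mem_image_of_mem μ (Finset.mem_univ a)
    rw [hst] at h1
    obtain ⟨k, hk, he⟩ := Finset.mem_image.mp h1
    exact ⟨k, Finset.mem_range.mp hk, he.symm⟩
  have hsm : ∀ k, k < N → ∃ c : α, μ c = m * s ^ k := by
    intro k hk
    have h1 : m * s ^ k ∈ Finset.univ.image μ := by
      rw [hst]; exact Finset.mem_image.mpr ⟨k, Finset.mem_range.mpr hk, rfl⟩
    obtain ⟨c, _, hc⟩ := Finset.mem_image.mp h1
    exact ⟨c, hc⟩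
  have hNs : 2 ≤ N → 1 < s := by
    intro h2
    have h1le : 1 ≤ s := by
      obtain ⟨c, hc⟩ := hsm 1 h2
      have hmle : m ≤ μ c := Finset.min'_le _ _ (Finset.mem_image_of_mem μ (Finset.mem_univ c))
      rw [hc, pow_one] at hmle
      exact le_of_mul_le_mul_left' (a := m) (by rw [mul_one]; exact hmle)
    rcases h1le.lt_or_eq with h | h
    · exact h
    · exfalso
      have hsub : Finset.univ.image μ ⊆ {m} := by
        rw [hst]
        intro x hx
        obtain ⟨k, _, hk⟩ := Finset.mem_image.mp hx
        simp [← h, ← hk]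
      have hcard := Finset.card_le_card hsub
      rw [← hNdef, Finset.card_singleton] at hcard
      omega
  intro w i hi1 hiw
  obtain ⟨i', rfl⟩ : ∃ i', i = i' + 1 := ⟨i - 1, (Nat.sub_add_cancel hi1).symm⟩
  simp only [Nat.add_sub_cancel]
  -- attainment of the max
  have key : ∀ k, k ≤ w.length → ∃ j, j + k ≤ w.length ∧
      factorWeight μ w k = weight μ ((w.drop j).take k) ∧ ((w.drop j).take k).length = k := by
    intro k hk
    have hne : ((List.range (w.length + 1 - k)).map
        fun j => weight μ ((w.drop j).take k)) ≠ [] := by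
      apply List.ne_nil_of_length_pos
      simp only [List.length_map, List.length_range]
      omega
    have hmem : factorWeight μ w k ∈ (List.range (w.length + 1 - k)).map
        (fun j => weight μ ((w.drop j).take k)) := by
      apply foldr_max_mem' hne
      intro x hx
      obtain ⟨j, _, rfl⟩ := List.mem_map.mp hx
      exact one_le_weight hμ _
    obtain ⟨j, hj, he⟩ := List.mem_map.mp hmem
    have hjr := List.mem_range.mp hj
    refine ⟨j, by omega, he.symm, ?_⟩
    simp only [List.length_take, List.length_drop]
    omega
  have hub : ∀ k j, j + k ≤ w.length → weight μ ((w.drop j).take k) ≤ factorWeight μ w k := by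
    intro k j hjk
    apply le_foldr_max'
    exact List.mem_map.mpr ⟨j, List.mem_range.mpr (by omega), rfl⟩
  obtain ⟨j, hj, hfi, hleni⟩ := key (i' + 1) hiw
  have hdlen : i' < (w.drop j).length := by
    simp only [List.length_drop]; omega
  set a : α := (w.drop j).get ⟨i', hdlen⟩ with hadef
  have hsplitw : weight μ ((w.drop j).take (i' + 1)) =
      weight μ ((w.drop j).take i') * μ a := weight_take_succ μ (w.drop j) i' hdlen
  have hfia : factorWeight μ w (i' + 1) = weight μ ((w.drop j).take i') * μ a :=
    hfi.trans hsplitw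
  have hu'le : weight μ ((w.drop j).take i') ≤ factorWeight μ w i' :=
    hub i' j (by omega)
  obtain ⟨jv, hjv, hfv, hlv⟩ := key i' (by omega)
  -- extension: some letter b with f(i') * μ b ≤ f(i'+1)
  have hext : ∃ b : α, factorWeight μ w i' * μ b ≤ factorWeight μ w (i' + 1) := by
    by_cases hc : jv + (i' + 1) ≤ w.length
    · have hdlen2 : i' < (w.drop jv).length := by
        simp only [List.length_drop]; omega
      refine ⟨(w.drop jv).get ⟨i', hdlen2⟩, ?_⟩
      have hs2 := weight_take_succ μ (w.drop jv) i' hdlen2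
      calc factorWeight μ w i' * μ ((w.drop jv).get ⟨i', hdlen2⟩)
          = weight μ ((w.drop jv).take (i' + 1)) := by rw [hfv, ← hs2]
        _ ≤ factorWeight μ w (i' + 1) := hub (i' + 1) jv hc
    · -- left extension
      have hjv1 : 1 ≤ jv := by omega
      have hjvlt : jv - 1 < w.length := by omega
      refine ⟨w.get ⟨jv - 1, hjvlt⟩, ?_⟩
      have hdropcons : w.drop (jv - 1) = w.get ⟨jv - 1, hjvlt⟩ :: w.drop jv := by
        have h11 : jv - 1 + 1 = jv := by omega
        rw [List.drop_eq_getElem_cons hjvlt, h11]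
        simp [List.get_eq_getElem]
      have htk : (w.drop (jv - 1)).take (i' + 1) =
          w.get ⟨jv - 1, hjvlt⟩ :: (w.drop jv).take i' := by
        rw [hdropcons, List.take_succ_cons]
      have hwt : weight μ ((w.drop (jv - 1)).take (i' + 1)) =
          factorWeight μ w i' * μ (w.get ⟨jv - 1, hjvlt⟩) := by
        rw [htk]
        have : weight μ (w.get ⟨jv - 1, hjvlt⟩ :: (w.drop jv).take i') =
            μ (w.get ⟨jv - 1, hjvlt⟩) * weight μ ((w.drop jv).take i') := by
          simp [weight]
        rw [this, ← hfv, mul_comm]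
      calc factorWeight μ w i' * μ (w.get ⟨jv - 1, hjvlt⟩)
          = weight μ ((w.drop (jv - 1)).take (i' + 1)) := hwt.symm
        _ ≤ factorWeight μ w (i' + 1) := hub (i' + 1) (jv - 1) (by omega)
  obtain ⟨b, hbext⟩ := hext
  -- decompositions
  obtain ⟨K, hKe, hKb⟩ := weight_decomp hμs ((w.drop j).take i')
  obtain ⟨L, hLe, hLb⟩ := weight_decomp hμs ((w.drop jv).take i')
  have hlenu' : ((w.drop j).take i').length = i' := by
    simp only [List.length_take, List.length_drop]; omega
  rw [hlenu'] at hKe hKb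
  rw [hlv] at hLe hLb
  obtain ⟨q, hqN, haq⟩ := hμs a
  obtain ⟨p, hpN, hbp⟩ := hμs b
  -- inequality 1 : s^K ≤ s^L
  have hKLs : s ^ K ≤ s ^ L := by
    apply le_of_mul_le_mul_left' (a := m ^ i')
    rw [← hKe, ← hLe, ← hfv]
    exact hu'le
  -- inequality 2 : s^(L+p) ≤ s^(K+q)
  have hLKs : s ^ (L + p) ≤ s ^ (K + q) := by
    apply le_of_mul_le_mul_left' (a := m ^ i' * m)
    calc m ^ i' * m * s ^ (L + p) = (m ^ i' * s ^ L) * (m * s ^ p) := by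
          rw [pow_add, mul_mul_mul_comm]
      _ = factorWeight μ w i' * μ b := by rw [hfv, hLe, hbp]
      _ ≤ factorWeight μ w (i' + 1) := hbext
      _ = (m ^ i' * s ^ K) * (m * s ^ q) := by rw [hfia, hKe, haq]
      _ = m ^ i' * m * s ^ (K + q) := by rw [pow_add, mul_mul_mul_comm]
  -- convert to exponent inequalities
  have hKL : K ≤ L ∧ L + p ≤ K + q := by
    by_cases hN2 : 2 ≤ N
    · have hs1 := hNs hN2
      exact ⟨(pow_le_pow_iff_right' hs1).mp hKLs, (pow_le_pow_iff_right' hs1).mp hLKs⟩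
    · have hNeq : N = 1 := by omega
      rw [hNeq] at hKb hLb hqN hpN
      simp only [Nat.sub_self, Nat.zero_mul, Nat.le_zero] at hKb hLb
      omega
  obtain ⟨hKL1, hKL2⟩ := hKL
  have hj0N : K + q - L < N := by omega
  obtain ⟨c, hc⟩ := hsm (K + q - L) hj0N
  refine ⟨c, ?_⟩
  have hexp : L + (K + q - L) = K + q := by omega
  rw [hfia, hKe, haq, hfv, hLe, hc]
  calc m ^ i' * s ^ K * (m * s ^ q) = m ^ i' * m * s ^ (K + q) := by
        rw [pow_add, mul_mul_mul_comm]
    _ = m ^ i' * m * s ^ (L + (K + q - L)) := by rw [hexp]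
    _ = m ^ i' * s ^ L * (m * s ^ (K + q - L)) := by rw [pow_add, mul_mul_mul_comm]
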